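/- Let X be a real Hilbert space and Y a finite-dimensional real Hilbert space, A : X → Y a bounded linear operator, and (X_j)_{j∈ℕ} a sequence of closed subspaces of X with X_j ⊆ X_{j+1} for all j, with (ker A)^⊥ ⊆ closure(∪_{j∈ℕ} X_j), and such that for every j the restriction of A to X_j is surjective onto Y. Let g ∈ Y. For each j let f_j⁺ denote the unique minimum-norm element of the nonempty closed affine set {f ∈ X_j : A f = g}, and let f⁺ denote the unique minimum-norm element of {f ∈ X : A f = g}. Then f_j⁺ → f⁺ in X as j → ∞. -/

import Mathlib

open Filter RealInnerProductSpace

lemma aux_inner_zero_of_min {X : Type*} [NormedAddCommGroup X] [InnerProductSpace ℝ X]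
    (v k : X) (h : ∀ t : ℝ, ‖v‖ ≤ ‖v + t • k‖) : ⟪v, k⟫ = 0 := by
  by_contra hc
  have hk : k ≠ 0 := by rintro rfl; simp at hc
  have hk' : (0:ℝ) < ‖k‖ := norm_pos_iff.mpr hk
  have hK : (0:ℝ) < ‖k‖ ^ 2 := by positivity
  set c : ℝ := ⟪v, k⟫ with hcdef
  set t : ℝ := -c / ‖k‖ ^ 2 with htdef
  have h1 := h t
  have hexp : ‖v + t • k‖ ^ 2 = ‖v‖ ^ 2 + 2 * (t * c) + t ^ 2 * ‖k‖ ^ 2 := by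
    rw [norm_add_sq_real, real_inner_smul_right, norm_smul]
    simp [mul_pow]
    exact Or.inl hcdef.symm
  have h2 : ‖v‖ ^ 2 ≤ ‖v + t • k‖ ^ 2 :=
    pow_le_pow_left₀ (norm_nonneg _) h1 2
  rw [hexp] at h2
  have ht : t * ‖k‖ ^ 2 = -c := by rw [htdef, div_mul_cancel₀ _ hK.ne']
  have hc2 : (0:ℝ) < c ^ 2 := by positivity
  nlinarith [sq_nonneg t, sq_nonneg c]

/-- Let `A : X →L[ℝ] Y` be bounded linear from a real Hilbert space `X`
to a finite-dimensional real Hilbert space `Y`, `(Xs j)` nested closed subspaces with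
`(ker A)ᗮ ⊆ closure (⋃ j, Xs j)` and with each restriction of `A` to `Xs j` surjective.
For `g ∈ Y`, the minimum-norm solutions `fj j` of `A f = g` over `Xs j` converge to the
minimum-norm solution `fplus` of `A f = g` over `X`. -/
theorem generalized_inverses_converge
    {X Y : Type*} [NormedAddCommGroup X] [InnerProductSpace ℝ X] [CompleteSpace X]
    [NormedAddCommGroup Y] [InnerProductSpace ℝ Y] [FiniteDimensional ℝ Y]
    (A : X →L[ℝ] Y)
    (Xs : ℕ → Submodule ℝ X) (hmono : ∀ j, Xs j ≤ Xs (j + 1))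
    (hclosed : ∀ j, IsClosed (Xs j : Set X))
    (hdense : (((LinearMap.ker (A : X →ₗ[ℝ] Y))ᗮ : Submodule ℝ X) : Set X) ⊆ closure (⋃ j, (Xs j : Set X)))
    (hsurj : ∀ j, ∀ y : Y, ∃ v ∈ Xs j, A v = y)
    (g : Y)
    (fj : ℕ → X) (hfjmem : ∀ j, fj j ∈ Xs j) (hfjsol : ∀ j, A (fj j) = g)
    (hfjmin : ∀ j, ∀ f ∈ Xs j, A f = g → ‖fj j‖ ≤ ‖f‖)
    (fplus : X) (hfplussol : A fplus = g)
    (hfplusmin : ∀ f : X, A f = g → ‖fplus‖ ≤ ‖f‖) :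
    Tendsto fj atTop (nhds fplus) := by
  have hmono' : Monotone Xs := monotone_nat_of_le_succ hmono
  -- fplus is orthogonal to ker A
  have hfo : fplus ∈ (LinearMap.ker (A : X →ₗ[ℝ] Y))ᗮ := by
    rw [Submodule.mem_orthogonal]
    intro u hu
    rw [real_inner_comm]
    refine aux_inner_zero_of_min fplus u (fun t => hfplusmin _ ?_)
    have hu0 : A u = 0 := hu
    simp [map_add, hfplussol, hu0]
  -- Pythagoras: ‖fj j‖² = ‖fplus‖² + ‖fj j - fplus‖²
  have hpyth : ∀ j, ‖fj j‖ ^ 2 = ‖fplus‖ ^ 2 + ‖fj j - fplus‖ ^ 2 := by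
    intro j
    have hker : fj j - fplus ∈ LinearMap.ker (A : X →ₗ[ℝ] Y) := by
      rw [LinearMap.mem_ker]
      simp [map_sub, hfjsol j, hfplussol]
    have hinner : ⟪fplus, fj j - fplus⟫ = 0 :=
      real_inner_comm (fj j - fplus) fplus ▸ (Submodule.mem_orthogonal _ _ |>.mp hfo _ hker)
    calc ‖fj j‖ ^ 2 = ‖fplus + (fj j - fplus)‖ ^ 2 := by rw [add_sub_cancel]
      _ = ‖fplus‖ ^ 2 + 2 * ⟪fplus, fj j - fplus⟫ + ‖fj j - fplus‖ ^ 2 := norm_add_sq_real _ _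
      _ = ‖fplus‖ ^ 2 + ‖fj j - fplus‖ ^ 2 := by rw [hinner]; ring
  -- Right inverse R of A with range in Xs 0
  obtain ⟨n, b⟩ : ∃ n, Nonempty (Module.Basis (Fin n) ℝ Y) :=
    ⟨Module.finrank ℝ Y, ⟨Module.finBasis ℝ Y⟩⟩
  obtain ⟨b⟩ := b
  choose w hwmem hwA using fun i => hsurj 0 (b i)
  set R : Y →ₗ[ℝ] X := b.constr ℝ w with hRdef
  have hAR : ∀ y, A (R y) = y := by
    intro y
    have : (A : X →ₗ[ℝ] Y).comp R = LinearMap.id := by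
      apply b.ext
      intro i
      simp [hRdef, Module.Basis.constr_basis, hwA]
    have := LinearMap.congr_fun this y
    simpa using this
  have hRmem : ∀ y, R y ∈ Xs 0 := by
    intro y
    rw [hRdef, Module.Basis.constr_apply_fintype]
    exact Submodule.sum_mem _ (fun i _ => Submodule.smul_mem _ _ (hwmem i))
  set Rc : Y →L[ℝ] X := LinearMap.toContinuousLinearMap R with hRcdef
  have hRc : ∀ y, Rc y = R y := fun y => rfl
  -- main estimate
  rw [Metric.tendsto_atTop]
  intro ε hε
  set M : ℝ := ‖fplus‖ with hM
  have hM0 : 0 ≤ M := norm_nonneg _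
  set C : ℝ := 1 + ‖Rc‖ * ‖A‖ with hC
  have hC1 : (1:ℝ) ≤ C := by
    have : 0 ≤ ‖Rc‖ * ‖A‖ := by positivity
    linarith
  have hC0 : (0:ℝ) < C := by linarith
  set D : ℝ := 2 * M * C + C ^ 2 + 1 with hD
  have hD0 : (0:ℝ) < D := by
    have h1 : 0 ≤ 2 * M * C := by positivity
    have h2 : 0 ≤ C ^ 2 := sq_nonneg C
    linarith
  set δ : ℝ := min 1 (ε ^ 2 / D) with hδdef
  have hδ0 : 0 < δ := lt_min one_pos (by positivity)
  have hδ1 : δ ≤ 1 := min_le_left _ _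
  have hδD : δ * D ≤ ε ^ 2 := by
    have h := min_le_right 1 (ε ^ 2 / D)
    calc δ * D ≤ (ε ^ 2 / D) * D := by
          exact mul_le_mul_of_nonneg_right h hD0.le
      _ = ε ^ 2 := by field_simp
  have hkey : 2 * M * δ * C + δ ^ 2 * C ^ 2 < ε ^ 2 := by
    have hsq2 : δ ^ 2 ≤ δ := by
      calc δ ^ 2 = δ * δ := sq δ
        _ ≤ 1 * δ := mul_le_mul_of_nonneg_right hδ1 hδ0.le
        _ = δ := one_mul δ
    have e1 : δ * D = 2 * M * δ * C + δ * C ^ 2 + δ := by rw [hD]; ring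
    have e2 : δ ^ 2 * C ^ 2 ≤ δ * C ^ 2 := mul_le_mul_of_nonneg_right hsq2 (sq_nonneg C)
    linarith
  -- find approximant v
  have hcl : fplus ∈ closure (⋃ j, (Xs j : Set X)) := hdense hfo
  obtain ⟨v, hvmem, hvd⟩ := Metric.mem_closure_iff.mp hcl δ hδ0
  obtain ⟨j0, hvj0⟩ := Set.mem_iUnion.mp hvmem
  refine ⟨j0, fun j hj => ?_⟩
  have hvXj : v ∈ Xs j := hmono' hj hvj0
  set u : X := v + R (g - A v) with hu
  have humem : u ∈ Xs j :=
    Submodule.add_mem _ hvXj (hmono' (Nat.zero_le j) (hRmem _))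
  have hAu : A u = g := by
    rw [hu, map_add, hAR]; abel
  have hle : ‖fj j‖ ≤ ‖u‖ := hfjmin j u humem hAu
  have hvf : ‖fplus - v‖ < δ := by
    rw [← dist_eq_norm]; exact hvd
  have hnormv : ‖v‖ ≤ M + δ := by
    calc ‖v‖ = ‖fplus - (fplus - v)‖ := by congr 1; abel
      _ ≤ ‖fplus‖ + ‖fplus - v‖ := norm_sub_le _ _
      _ ≤ M + δ := by linarith
  have hAv : ‖g - A v‖ ≤ ‖A‖ * δ := by
    have : g - A v = A (fplus - v) := by rw [map_sub, hfplussol]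
    rw [this]
    calc ‖A (fplus - v)‖ ≤ ‖A‖ * ‖fplus - v‖ := A.le_opNorm _
      _ ≤ ‖A‖ * δ := mul_le_mul_of_nonneg_left hvf.le (norm_nonneg _)
  have hRbound : ‖R (g - A v)‖ ≤ ‖Rc‖ * (‖A‖ * δ) := by
    rw [← hRc]
    calc ‖Rc (g - A v)‖ ≤ ‖Rc‖ * ‖g - A v‖ := Rc.le_opNorm _
      _ ≤ ‖Rc‖ * (‖A‖ * δ) := mul_le_mul_of_nonneg_left hAv (norm_nonneg _)
  have hub : ‖u‖ ≤ M + δ * C := by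
    calc ‖u‖ ≤ ‖v‖ + ‖R (g - A v)‖ := norm_add_le _ _
      _ ≤ M + δ + ‖Rc‖ * (‖A‖ * δ) := by linarith
      _ = M + δ * C := by rw [hC]; ring
  have hfjb : ‖fj j‖ ≤ M + δ * C := le_trans hle hub
  have hsq : ‖fj j - fplus‖ ^ 2 < ε ^ 2 := by
    have h1 : ‖fj j‖ ^ 2 ≤ (M + δ * C) ^ 2 :=
      pow_le_pow_left₀ (norm_nonneg _) hfjb 2
    have h2 := hpyth j
    have hexp : (M + δ * C) ^ 2 = M ^ 2 + (2 * M * δ * C + δ ^ 2 * C ^ 2) := by ring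
    linarith
  have : ‖fj j - fplus‖ < ε := lt_of_pow_lt_pow_left₀ 2 hε.le hsq
  rwa [dist_eq_norm]
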